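/- Let n be a positive integer, let A and ρ be n×n positive definite complex matrices, let s > 0, and let K be an n×n skew-Hermitian matrix (K* = −K). Set X = A^{1/2} ρ A^{1/2}, Y = (X + sI)⁻¹, and T = ρ A^{1/2} Y ρ Y + Y ρ Y A^{1/2} ρ. Then the function t ↦ Tr[ ρ ( (e^{-tK} A^{1/2} e^{tK}) ρ (e^{-tK} A^{1/2} e^{tK}) + sI )⁻¹ ] is differentiable at t = 0 with derivative equal to −Tr( K (T A^{1/2} − A^{1/2} T) ), i.e. Tr( K (A^{1/2} T − T A^{1/2}) ). -/

import Mathlib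

set_option maxHeartbeats 1000000

open Matrix
open scoped ComplexOrder Classical

/-- The positive semidefinite square root of a matrix (junk value `0` if the matrix is
not positive semidefinite). -/
noncomputable def msqrt {n : ℕ} (A : Matrix (Fin n) (Fin n) ℂ) : Matrix (Fin n) (Fin n) ℂ :=
  if h : A.PosSemidef then
    (h.1.eigenvectorUnitary : Matrix (Fin n) (Fin n) ℂ) *
      diagonal ((↑) ∘ (Real.sqrt ·) ∘ h.1.eigenvalues) *
      (star h.1.eigenvectorUnitary : Matrix (Fin n) (Fin n) ℂ)
  else 0

section aux

attribute [local instance] Matrix.linftyOpNormedRing Matrix.linftyOpNormedAlgebra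
  Matrix.linftyOpNormedAddCommGroup

theorem stmt12aux (n : ℕ)
    (A ρ : Matrix (Fin n) (Fin n) ℂ)
    (hA : A.PosDef) (hρ : ρ.PosDef)
    (s : ℝ) (hs : 0 < s)
    (K : Matrix (Fin n) (Fin n) ℂ)
    (X Y T : Matrix (Fin n) (Fin n) ℂ)
    (hX : X = msqrt A * ρ * msqrt A)
    (hY : Y = (X + (s : ℂ) • 1)⁻¹)
    (hT : T = ρ * msqrt A * Y * ρ * Y + Y * ρ * Y * msqrt A * ρ) :
    HasDerivAt
      (fun t : ℝ =>
        (ρ * ((NormedSpace.exp (-(t : ℂ) • K) * msqrt A * NormedSpace.exp ((t : ℂ) • K)) * ρ *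
              (NormedSpace.exp (-(t : ℂ) • K) * msqrt A * NormedSpace.exp ((t : ℂ) • K)) +
            (s : ℂ) • 1)⁻¹).trace)
      (-((K * (T * msqrt A - msqrt A * T)).trace)) 0 := by
  set a : Matrix (Fin n) (Fin n) ℂ := msqrt A with ha
  have haH : aᴴ = a := by
    rw [ha, msqrt, dif_pos hA.posSemidef]
    rw [conjTranspose_mul, conjTranspose_mul, diagonal_conjTranspose]
    simp [Matrix.mul_assoc, ← Matrix.star_eq_conjTranspose, Pi.star_def, Function.comp_def,
      Complex.star_def, Complex.conj_ofReal]
  -- derivative of the exponential factors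
  have hg1 : HasDerivAt (fun t : ℝ => NormedSpace.exp (-(t : ℂ) • K)) (-K) 0 := by
    have h := hasDerivAt_exp_smul_const (𝕂 := ℝ) (-K) 0
    have : (fun t : ℝ => NormedSpace.exp (t • (-K)))
        = fun t : ℝ => NormedSpace.exp (-(t : ℂ) • K) := by
      funext t
      congr 1
      rw [← Complex.coe_smul, neg_smul, smul_neg]
    erw [this] at h
    simp at h ⊢
    exact h
  have hg2 : HasDerivAt (fun t : ℝ => NormedSpace.exp ((t : ℂ) • K)) K 0 := by
    have h := hasDerivAt_exp_smul_const (𝕂 := ℝ) K 0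
    have : (fun t : ℝ => NormedSpace.exp (t • K))
        = fun t : ℝ => NormedSpace.exp ((t : ℂ) • K) := by
      funext t; rw [Complex.coe_smul]
    erw [this] at h
    simp at h
    exact h
  -- derivative of B t = e^{-tK} a e^{tK}
  have hB : HasDerivAt
      (fun t : ℝ => NormedSpace.exp (-(t : ℂ) • K) * a * NormedSpace.exp ((t : ℂ) • K))
      (a * K - K * a) 0 := by
    have h := ((hg1.mul_const a).mul hg2)
    simp only [Complex.ofReal_zero, neg_zero, zero_smul, NormedSpace.exp_zero, one_mul,
      mul_one] at h
    convert h using 1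
    · rfl
    · rfl
    · rfl
    · rfl
    noncomm_ring
  -- derivative of M t = B t * ρ * B t + s • 1
  set D : Matrix (Fin n) (Fin n) ℂ := a * K - K * a with hD
  set M' : Matrix (Fin n) (Fin n) ℂ := D * ρ * a + a * ρ * D with hM'
  have hM : HasDerivAt
      (fun t : ℝ =>
        (NormedSpace.exp (-(t : ℂ) • K) * a * NormedSpace.exp ((t : ℂ) • K)) * ρ *
          (NormedSpace.exp (-(t : ℂ) • K) * a * NormedSpace.exp ((t : ℂ) • K)) +
          (s : ℂ) • 1) M' 0 := by
    have h := ((hB.mul_const ρ).mul hB).add_const ((s : ℂ) • (1 : Matrix (Fin n) (Fin n) ℂ))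
    simp only [Complex.ofReal_zero, neg_zero, zero_smul, NormedSpace.exp_zero, one_mul,
      mul_one] at h
    exact h
  -- the matrix at t = 0 is X + s•1, which is invertible
  have hXpsd : X.PosSemidef := by
    have h := hρ.posSemidef.conjTranspose_mul_mul_same a
    rw [haH] at h
    rw [hX]
    exact h
  have hXs : (X + (s : ℂ) • 1).PosDef := by
    refine Matrix.PosDef.posSemidef_add hXpsd ?_
    have hdiag : ((s : ℂ) • (1 : Matrix (Fin n) (Fin n) ℂ)) = diagonal (fun _ => (s : ℂ)) := by
      ext i j
      by_cases h : i = j <;> simp [Matrix.one_apply, h]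
    rw [hdiag, posDef_diagonal_iff]
    intro i
    exact_mod_cast hs
  have hunit : IsUnit (X + (s : ℂ) • 1) := hXs.isUnit
  obtain ⟨u, hu⟩ := hunit
  have huinv : (↑u⁻¹ : Matrix (Fin n) (Fin n) ℂ) = Y := by
    rw [hY, Matrix.nonsing_inv_eq_ringInverse, ← hu, Ring.inverse_unit]
  -- derivative of the inverse
  have h0 : (NormedSpace.exp (-((0:ℝ) : ℂ) • K) * a * NormedSpace.exp (((0:ℝ) : ℂ) • K)) * ρ *
      (NormedSpace.exp (-((0:ℝ) : ℂ) • K) * a * NormedSpace.exp (((0:ℝ) : ℂ) • K)) +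
      (s : ℂ) • 1 = ↑u := by
    rw [hu, hX]
    norm_num [NormedSpace.exp_zero]
  have hInv : HasDerivAt
      (fun t : ℝ => Ring.inverse
        ((NormedSpace.exp (-(t : ℂ) • K) * a * NormedSpace.exp ((t : ℂ) • K)) * ρ *
          (NormedSpace.exp (-(t : ℂ) • K) * a * NormedSpace.exp ((t : ℂ) • K)) +
          (s : ℂ) • 1)) (-(Y * M' * Y)) 0 := by
    have hF := hasFDerivAt_ringInverse (𝕜 := ℝ) (R := Matrix (Fin n) (Fin n) ℂ) u
    rw [← h0] at hF
    have hder := hF.comp_hasDerivAt (0 : ℝ) hM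
    convert hder using 1
    · rfl
    · rfl
    · rfl
    · rfl
    simp [huinv, ContinuousLinearMap.neg_apply, ContinuousLinearMap.mulLeftRight_apply,
      Matrix.mul_assoc]
  -- compose with the trace linear map
  have hdim : FiniteDimensional ℝ (Matrix (Fin n) (Fin n) ℂ) := by infer_instance
  set L : Matrix (Fin n) (Fin n) ℂ →ₗ[ℝ] ℂ :=
    { toFun := fun W => (ρ * W).trace
      map_add' := fun W1 W2 => by simp [Matrix.mul_add]
      map_smul' := fun c W => by simp [Matrix.mul_smul] } with hL
  have hLc : HasDerivAt
      (fun t : ℝ => (ρ * Ring.inverse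
        ((NormedSpace.exp (-(t : ℂ) • K) * a * NormedSpace.exp ((t : ℂ) • K)) * ρ *
          (NormedSpace.exp (-(t : ℂ) • K) * a * NormedSpace.exp ((t : ℂ) • K)) +
          (s : ℂ) • 1)).trace) ((ρ * -(Y * M' * Y)).trace) 0 := by
    have := (LinearMap.toContinuousLinearMap L).hasFDerivAt.comp_hasDerivAt (x := (0:ℝ)) hInv
    exact this
  -- identify the derivative value
  have key : (ρ * -(Y * M' * Y)).trace = -((K * (T * a - a * T)).trace) := by
    have cyc : ∀ P Q : Matrix (Fin n) (Fin n) ℂ, (P * Q).trace = (Q * P).trace :=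
      fun P Q => Matrix.trace_mul_comm P Q
    have e1 : (ρ*Y*a*K*ρ*a*Y).trace = (K*(ρ*a*Y*ρ*Y*a)).trace := by
      rw [show ρ*Y*a*K*ρ*a*Y = (ρ*Y*a)*(K*ρ*a*Y) by noncomm_ring, cyc,
        show (K*ρ*a*Y)*(ρ*Y*a) = K*(ρ*a*Y*ρ*Y*a) by noncomm_ring]
    have e2 : (ρ*Y*K*a*ρ*a*Y).trace = (K*(a*ρ*a*Y*ρ*Y)).trace := by
      rw [show ρ*Y*K*a*ρ*a*Y = (ρ*Y)*(K*a*ρ*a*Y) by noncomm_ring, cyc,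
        show (K*a*ρ*a*Y)*(ρ*Y) = K*(a*ρ*a*Y*ρ*Y) by noncomm_ring]
    have e3 : (ρ*Y*a*ρ*a*K*Y).trace = (K*(Y*ρ*Y*a*ρ*a)).trace := by
      rw [show ρ*Y*a*ρ*a*K*Y = (ρ*Y*a*ρ*a)*(K*Y) by noncomm_ring, cyc,
        show (K*Y)*(ρ*Y*a*ρ*a) = K*(Y*ρ*Y*a*ρ*a) by noncomm_ring]
    have e4 : (ρ*Y*a*ρ*K*a*Y).trace = (K*(a*Y*ρ*Y*a*ρ)).trace := by
      rw [show ρ*Y*a*ρ*K*a*Y = (ρ*Y*a*ρ)*(K*a*Y) by noncomm_ring, cyc,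
        show (K*a*Y)*(ρ*Y*a*ρ) = K*(a*Y*ρ*Y*a*ρ) by noncomm_ring]
    have lhs_exp : ρ * -(Y * M' * Y)
        = -(ρ*Y*a*K*ρ*a*Y) + (ρ*Y*K*a*ρ*a*Y) + -(ρ*Y*a*ρ*a*K*Y) + (ρ*Y*a*ρ*K*a*Y) := by
      rw [hM', hD]; noncomm_ring
    have rhs_exp : K * (T * a - a * T)
        = K*(ρ*a*Y*ρ*Y*a) + K*(Y*ρ*Y*a*ρ*a) - K*(a*ρ*a*Y*ρ*Y) - K*(a*Y*ρ*Y*a*ρ) := by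
      rw [hT]; noncomm_ring
    rw [lhs_exp, rhs_exp]
    simp only [trace_add, trace_sub, trace_neg]
    rw [e1, e2, e3, e4]
    ring
  -- finish
  have final := hLc
  rw [key] at final
  convert final using 2 with t
  rw [Matrix.nonsing_inv_eq_ringInverse]
end aux

/-- with `X = A^{1/2}ρA^{1/2}`, `Y = (X + sI)⁻¹`,
`T = ρA^{1/2}YρY + YρYA^{1/2}ρ`, the function
`t ↦ Tr[ρ((e^{-tK}A^{1/2}e^{tK})ρ(e^{-tK}A^{1/2}e^{tK}) + sI)⁻¹]`
is differentiable at `t = 0` with derivative `−Tr(K(TA^{1/2} − A^{1/2}T))`,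
i.e. `Tr(K(A^{1/2}T − TA^{1/2}))`. -/
theorem stmt12 (n : ℕ) (hn : 0 < n)
    (A ρ : Matrix (Fin n) (Fin n) ℂ)
    (hA : A.PosDef) (hρ : ρ.PosDef)
    (s : ℝ) (hs : 0 < s)
    (K : Matrix (Fin n) (Fin n) ℂ) (hK : Kᴴ = -K)
    (X Y T : Matrix (Fin n) (Fin n) ℂ)
    (hX : X = msqrt A * ρ * msqrt A)
    (hY : Y = (X + (s : ℂ) • 1)⁻¹)
    (hT : T = ρ * msqrt A * Y * ρ * Y + Y * ρ * Y * msqrt A * ρ) :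
    HasDerivAt
      (fun t : ℝ =>
        (ρ * ((NormedSpace.exp (-(t : ℂ) • K) * msqrt A * NormedSpace.exp ((t : ℂ) • K)) * ρ *
              (NormedSpace.exp (-(t : ℂ) • K) * msqrt A * NormedSpace.exp ((t : ℂ) • K)) +
            (s : ℂ) • 1)⁻¹).trace)
      (-((K * (T * msqrt A - msqrt A * T)).trace)) 0 :=
  stmt12aux n A ρ hA hρ s hs K X Y T hX hY hT
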